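/- Let E ⊆ ℝⁿ be a nonempty, closed, convex, permutation-invariant set and let h : ℝⁿ → ℝ be convex. If a minimizes h over E, then there exists c ∈ ∂h(a) (a subgradient of h at a over all of ℝⁿ) such that ⟨a, −c⟩ = ⟨a↓, (−c)↓⟩. -/

import Mathlib

open Finset

/-- Decreasing rearrangement of a vector in ℝⁿ. -/
noncomputable def dsort {n : ℕ} (v : Fin n → ℝ) : Fin n → ℝ :=
  fun i => - ((fun j => - v j) ∘ Tuple.sort (fun j => - v j)) i

lemma dsort_eq {n : ℕ} (v : Fin n → ℝ) (i : Fin n) :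
    dsort v i = v (Tuple.sort (fun j => - v j) i) := by
  simp [dsort]

lemma dsort_antitone {n : ℕ} (v : Fin n → ℝ) : Antitone (dsort v) := by
  have := Tuple.monotone_sort (fun j => - v j)
  intro i j hij
  have h2 := this hij
  simp only [Function.comp_apply] at h2
  simp only [dsort_eq]
  linarith

theorem stmt5 {n : ℕ} (E : Set (Fin n → ℝ)) (hE : E.Nonempty)
    (hEclosed : IsClosed E) (hEconv : Convex ℝ E)
    (hinv : ∀ x ∈ E, ∀ σ : Equiv.Perm (Fin n), (fun i => x (σ i)) ∈ E)
    (h : (Fin n → ℝ) → ℝ) (hconv : ConvexOn ℝ Set.univ h)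
    (a : Fin n → ℝ) (ha : a ∈ E)
    (hmin : ∀ x ∈ E, h a ≤ h x) :
    ∃ c : Fin n → ℝ,
      (∀ x : Fin n → ℝ, h x - h a ≥ ∑ i, c i * (x i - a i)) ∧
      ∑ i, a i * (- c i) = ∑ i, dsort a i * dsort (fun j => - c j) i := by
  classical
  -- continuity of h
  have hcont : Continuous h := by
    have := hconv.continuousOn isOpen_univ
    rwa [← continuousOn_univ]
  -- separation in (Fin n → ℝ) × ℝ
  set A : Set ((Fin n → ℝ) × ℝ) := {p | h p.1 - h a < p.2} with hA
  set B : Set ((Fin n → ℝ) × ℝ) := E ×ˢ Set.Iic (0 : ℝ) with hB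
  have hAopen : IsOpen A :=
    isOpen_lt (by continuity) continuous_snd
  have hAconv : Convex ℝ A := by
    intro p hp q hq s t hs ht hst
    simp only [hA, Set.mem_setOf_eq] at hp hq ⊢
    have hmain := hconv.2 (Set.mem_univ p.1) (Set.mem_univ q.1) hs ht hst
    have h4 : s * h a + t * h a = h a := by rw [← add_mul, hst, one_mul]
    have h1 : h (s • p.1 + t • q.1) ≤ s * h p.1 + t * h q.1 := hmain
    rcases hs.eq_or_lt with hs0 | hs0
    · have ht1 : t = 1 := by linarith
      have h2 : t * (h q.1 - h a) < t * q.2 := by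
        rw [ht1]; simpa using hq
      have h3 : s * (h p.1 - h a) ≤ s * p.2 :=
        mul_le_mul_of_nonneg_left hp.le hs
      simp only [Prod.fst_add, Prod.smul_fst, Prod.snd_add, Prod.smul_snd, smul_eq_mul]
      nlinarith
    · have h2 : s * (h p.1 - h a) < s * p.2 := mul_lt_mul_of_pos_left hp hs0
      have h3 : t * (h q.1 - h a) ≤ t * q.2 :=
        mul_le_mul_of_nonneg_left hq.le ht
      simp only [Prod.fst_add, Prod.smul_fst, Prod.snd_add, Prod.smul_snd, smul_eq_mul]
      nlinarith
  have hBconv : Convex ℝ B := hEconv.prod (convex_Iic 0)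
  have hdisj : Disjoint A B := by
    rw [Set.disjoint_left]
    rintro p hp hpB
    simp only [hA, Set.mem_setOf_eq] at hp
    obtain ⟨hp1, hp2⟩ := hpB
    have := hmin p.1 hp1
    simp only [Set.mem_Iic] at hp2
    linarith
  obtain ⟨f, u, hfA, hfB⟩ := geometric_hahn_banach_open hAconv hAopen hBconv hdisj
  -- decompose f
  set β : ℝ := f (0, 1) with hβdef
  have hsplit : ∀ (x : Fin n → ℝ) (t : ℝ), f (x, t) = f (x, 0) + t * β := by
    intro x t
    have : (x, t) = (x, (0 : ℝ)) + t • ((0 : Fin n → ℝ), (1 : ℝ)) := by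
      simp [Prod.ext_iff]
    rw [this, map_add, map_smul]
    simp [hβdef]
  have hβneg : β < 0 := by
    have h1 : f (a, 1) < u := by
      apply hfA; simp [hA]
    have h2 : u ≤ f (a, 0) := hfB (a, 0) (by simp [hB, ha])
    rw [hsplit] at h1
    linarith
  -- key inequality: f(x,0) + (h x - h a) β ≤ f(a,0)
  have hu : u = f (a, 0) := by
    have h2 : u ≤ f (a, 0) := hfB (a, 0) (by simp [hB, ha])
    refine le_antisymm h2 ?_
    by_contra hlt
    push_neg at hlt
    set ε : ℝ := (f (a, 0) - u) / (-(2 * β)) with hε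
    have hεpos : 0 < ε := by
      apply div_pos (by linarith) (by linarith)
    have h1 : f (a, ε) < u := by
      apply hfA; simp only [hA, Set.mem_setOf_eq]; simpa using hεpos
    rw [hsplit] at h1
    have : ε * β = -((f (a, 0) - u) / 2) := by
      rw [hε, div_mul_eq_mul_div, div_eq_iff (ne_of_gt (by linarith))]; ring
    rw [this] at h1
    linarith
  have hkey : ∀ x : Fin n → ℝ, f (x, 0) + (h x - h a) * β ≤ f (a, 0) := by
    intro x
    by_contra hlt
    push_neg at hlt
    set L : ℝ := f (x, 0) + (h x - h a) * β with hL
    set δ : ℝ := (L - f (a, 0)) / (-(2 * β)) with hδ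
    have hδpos : 0 < δ := div_pos (by linarith) (by linarith)
    have h1 : f (x, h x - h a + δ) < u := by
      apply hfA; simp only [hA, Set.mem_setOf_eq]; simpa using hδpos
    rw [hsplit, hu] at h1
    have : δ * β = -((L - f (a, 0)) / 2) := by
      rw [hδ, div_mul_eq_mul_div, div_eq_iff (ne_of_gt (by linarith))]; ring
    nlinarith
  -- the linear functional on ℝⁿ
  set g : (Fin n → ℝ) →ₗ[ℝ] ℝ := f.toLinearMap.comp (LinearMap.inl ℝ (Fin n → ℝ) ℝ) with hg
  have hgapp : ∀ x, g x = f (x, 0) := fun x => rfl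
  set c : Fin n → ℝ := fun i => g (fun j => if i = j then 1 else 0) / (-β) with hc
  have hsum : ∀ x : Fin n → ℝ, ∑ i, c i * x i = g x / (-β) := by
    intro x
    rw [g.pi_apply_eq_sum_univ x, Finset.sum_div]
    apply Finset.sum_congr rfl
    intro i _
    simp only [hc, smul_eq_mul]
    ring
  have hsum' : ∀ x y : Fin n → ℝ, ∑ i, c i * (x i - y i) = (g x - g y) / (-β) := by
    intro x y
    have : ∑ i, c i * (x i - y i) = ∑ i, c i * ((x - y) i) := by
      apply Finset.sum_congr rfl; intro i _; simp
    rw [this, hsum, map_sub]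
  -- subgradient property
  have hsub : ∀ x : Fin n → ℝ, h x - h a ≥ ∑ i, c i * (x i - a i) := by
    intro x
    rw [hsum']
    have := hkey x
    rw [← hgapp x, ← hgapp a] at this
    rw [ge_iff_le, div_le_iff₀ (by linarith : (0:ℝ) < -β)]
    nlinarith
  -- normal cone property
  have hnormal : ∀ x ∈ E, ∑ i, (- c i) * (x i - a i) ≤ 0 := by
    intro x hx
    have h2 : u ≤ f (x, 0) := hfB (x, 0) (by simp [hB, hx])
    rw [hu] at h2
    have hgxa : 0 ≤ g x - g a := by rw [hgapp, hgapp]; linarith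
    have : ∑ i, c i * (x i - a i) = (g x - g a) / (-β) := hsum' x a
    have hnn : 0 ≤ ∑ i, c i * (x i - a i) := by
      rw [this]; exact div_nonneg hgxa (by linarith)
    have : ∑ i, (- c i) * (x i - a i) = - ∑ i, c i * (x i - a i) := by
      rw [← Finset.sum_neg_distrib]; apply Finset.sum_congr rfl; intro i _; ring
    rw [this]; linarith
  refine ⟨c, hsub, ?_⟩
  -- rearrangement part
  set b : Fin n → ℝ := fun j => - c j with hb
  set σ : Equiv.Perm (Fin n) := Tuple.sort (fun j => - a j) with hσ
  set τ : Equiv.Perm (Fin n) := Tuple.sort (fun j => - b j) with hτ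
  have hda : ∀ i, dsort a i = a (σ i) := fun i => dsort_eq a i
  have hdb : ∀ i, dsort b i = b (τ i) := fun i => dsort_eq b i
  have hmono : Monovary (dsort a) (dsort b) :=
    (dsort_antitone a).monovary (dsort_antitone b)
  apply le_antisymm
  · -- ∑ a i * b i ≤ ∑ dsort a i * dsort b i
    have e1 : ∑ i, a i * b i = ∑ i, a (σ i) * b (σ i) :=
      (Equiv.sum_comp σ (fun i => a i * b i)).symm
    have e2 : ∀ i, b (σ i) = dsort b ((σ.trans τ.symm) i) := by
      intro i; rw [hdb]; simp
    calc ∑ i, a i * (- c i) = ∑ i, a i * b i := rfl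
      _ = ∑ i, a (σ i) * b (σ i) := e1
      _ = ∑ i, dsort a i * dsort b ((σ.trans τ.symm) i) := by
          apply Finset.sum_congr rfl; intro i _; rw [hda, e2]
      _ ≤ ∑ i, dsort a i * dsort b i := by
          have := hmono.sum_smul_comp_perm_le_sum_smul (σ := σ.trans τ.symm)
          simpa [smul_eq_mul] using this
  · -- ∑ dsort a i * dsort b i ≤ ∑ a i * b i
    set ρ : Equiv.Perm (Fin n) := τ.symm.trans σ with hρ
    have haρ : (fun i => a (ρ i)) ∈ E := hinv a ha ρ
    have hn := hnormal _ haρ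
    have e1 : ∑ i, dsort a i * dsort b i = ∑ j, b j * a (ρ j) := by
      have : ∀ i, dsort a i * dsort b i = (fun j => b j * a (ρ j)) (τ i) := by
        intro i
        simp only [hda, hdb, hρ, Equiv.trans_apply, Equiv.symm_apply_apply]
        ring
      rw [Finset.sum_congr rfl (fun i _ => this i)]
      exact Equiv.sum_comp τ (fun j => b j * a (ρ j))
    have e2 : ∑ i, b i * (a (ρ i) - a i) = ∑ i, b i * a (ρ i) - ∑ i, b i * a i := by
      rw [← Finset.sum_sub_distrib]; apply Finset.sum_congr rfl; intro i _; ring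
    have hn' : ∑ i, b i * a (ρ i) ≤ ∑ i, b i * a i := by
      have : ∑ i, b i * (a (ρ i) - a i) ≤ 0 := hn
      linarith [e2 ▸ this]
    calc ∑ i, dsort a i * dsort b i = ∑ j, b j * a (ρ j) := e1
      _ ≤ ∑ i, b i * a i := hn'
      _ = ∑ i, a i * (- c i) := by apply Finset.sum_congr rfl; intro i _; simp [hb]; ring
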